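/- Let Q ∈ ℝ^{M×M} be symmetric positive semidefinite, c > 0, υ ∈ (0,1], H = [[Q + Mcυ·I, −Q], [−Q, Q + Mc·I]] ∈ ℝ^{2M×2M}, b ∈ ℝ^{2M}, and f(α) = (1/2)αᵀHα + bᵀα. If α* minimizes f over the nonnegative orthant {α ∈ ℝ^{2M} : α ⪰ 0}, then for every α̃ ⪰ 0 one has f(α̃) − f(α*) ≥ (Mcυ/2)·‖α̃ − α*‖². -/

import Mathlib

open Finset Matrix

private lemma sodm_qform_bound (M : ℕ) (c υ : ℝ) (hc : 0 < c) (hυ0 : 0 < υ) (hυ1 : υ ≤ 1)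
    (Q : Matrix (Fin M) (Fin M) ℝ) (hQ : Q.PosSemidef)
    (d : Fin M ⊕ Fin M → ℝ) :
    (M : ℝ) * c * υ * ∑ x, d x ^ 2 ≤
      d ⬝ᵥ (Matrix.fromBlocks
      (Q + ((M : ℝ) * c * υ) • (1 : Matrix (Fin M) (Fin M) ℝ)) (-Q)
      (-Q) (Q + ((M : ℝ) * c) • (1 : Matrix (Fin M) (Fin M) ℝ))).mulVec d := by
  set a : ℝ := (M : ℝ) * c * υ with ha
  set u : Fin M → ℝ := fun i => d (Sum.inl i)
  set v : Fin M → ℝ := fun i => d (Sum.inr i)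
  have hd : d = Sum.elim u v := by funext x; cases x <;> rfl
  have ha0 : 0 ≤ a := by positivity
  rw [hd, fromBlocks_mulVec, sumElim_dotProduct_sumElim]
  simp only [Sum.elim_comp_inl, Sum.elim_comp_inr]
  have hQuv : 0 ≤ (u - v) ⬝ᵥ Q.mulVec (u - v) := by simpa using hQ.dotProduct_mulVec_nonneg (u - v)
  have hsum : ∑ x, (Sum.elim u v) x ^ 2 = u ⬝ᵥ u + v ⬝ᵥ v := by
    rw [Fintype.sum_sum_type]; simp [dotProduct, sq]
  rw [hsum]
  have e1 : u ⬝ᵥ ((Q + a • (1 : Matrix (Fin M) (Fin M) ℝ)).mulVec u + (-Q).mulVec v)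
      = u ⬝ᵥ Q.mulVec u + a * (u ⬝ᵥ u) - u ⬝ᵥ Q.mulVec v := by
    simp [mulVec_add, add_mulVec, smul_mulVec, dotProduct_add, dotProduct_smul,
      neg_mulVec, dotProduct_neg, one_mulVec, smul_eq_mul]
    ring
  have e2 : v ⬝ᵥ ((-Q).mulVec u + (Q + ((M:ℝ)*c) • (1 : Matrix (Fin M) (Fin M) ℝ)).mulVec v)
      = v ⬝ᵥ Q.mulVec v + ((M:ℝ)*c) * (v ⬝ᵥ v) - v ⬝ᵥ Q.mulVec u := by
    simp [mulVec_add, add_mulVec, smul_mulVec, dotProduct_add, dotProduct_smul,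
      neg_mulVec, dotProduct_neg, one_mulVec, smul_eq_mul]
    ring
  rw [e1, e2]
  have hexp : (u - v) ⬝ᵥ Q.mulVec (u - v)
      = u ⬝ᵥ Q.mulVec u - u ⬝ᵥ Q.mulVec v - v ⬝ᵥ Q.mulVec u + v ⬝ᵥ Q.mulVec v := by
    simp [mulVec_sub, sub_dotProduct, dotProduct_sub]
    ring
  have hvv : 0 ≤ v ⬝ᵥ v := Finset.sum_nonneg fun i _ => mul_self_nonneg _
  have hab : a * (v ⬝ᵥ v) ≤ ((M:ℝ)*c) * (v ⬝ᵥ v) := by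
    apply mul_le_mul_of_nonneg_right _ hvv
    rw [ha]
    nlinarith [Nat.cast_nonneg (α := ℝ) M]
  nlinarith [hQuv, hexp]

private lemma sodm_arith (a S L q : ℝ) (hS : 0 ≤ S) (ha : 0 ≤ a) (hqb : a * S ≤ q)
    (key : ∀ t : ℝ, 0 ≤ t → t ≤ 1 → 0 ≤ t * L + t ^ 2 / 2 * q) :
    a / 2 * S ≤ L + 1 / 2 * q := by
  have hq0 : 0 ≤ q := le_trans (mul_nonneg ha hS) hqb
  have hL : 0 ≤ L := by
    by_contra hL
    push_neg at hL
    rcases eq_or_lt_of_le hq0 with hq | hq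
    · have := key 1 zero_le_one le_rfl
      nlinarith
    · have ht0 : 0 < min 1 (-L / q) := lt_min one_pos (div_pos (neg_pos.2 hL) hq)
      have ht1 : min 1 (-L / q) ≤ 1 := min_le_left _ _
      have ht2 : min 1 (-L / q) ≤ -L / q := min_le_right _ _
      have htq : min 1 (-L / q) * q ≤ -L := (le_div_iff₀ hq).mp ht2
      have := key _ ht0.le ht1
      nlinarith [mul_le_mul_of_nonneg_left htq ht0.le,
        mul_neg_of_pos_of_neg ht0 hL]
  linarith

theorem sodm_quadratic_growth
    (M : ℕ) (c υ : ℝ) (hc : 0 < c) (hυ0 : 0 < υ) (hυ1 : υ ≤ 1)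
    (Q : Matrix (Fin M) (Fin M) ℝ) (hQ : Q.PosSemidef)
    (H : Matrix (Fin M ⊕ Fin M) (Fin M ⊕ Fin M) ℝ)
    (hH : H = Matrix.fromBlocks
      (Q + ((M : ℝ) * c * υ) • (1 : Matrix (Fin M) (Fin M) ℝ)) (-Q)
      (-Q) (Q + ((M : ℝ) * c) • (1 : Matrix (Fin M) (Fin M) ℝ)))
    (b : Fin M ⊕ Fin M → ℝ)
    (f : (Fin M ⊕ Fin M → ℝ) → ℝ)
    (hf : ∀ α : Fin M ⊕ Fin M → ℝ, f α = (1/2) * (α ⬝ᵥ H.mulVec α) + b ⬝ᵥ α)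
    (αs : Fin M ⊕ Fin M → ℝ) (hαs : ∀ x, 0 ≤ αs x)
    (hmin : ∀ α : Fin M ⊕ Fin M → ℝ, (∀ x, 0 ≤ α x) → f αs ≤ f α) :
    ∀ αt : Fin M ⊕ Fin M → ℝ, (∀ x, 0 ≤ αt x) →
      ((M : ℝ) * c * υ / 2) * ∑ x, (αt x - αs x)^2 ≤ f αt - f αs := by
  intro αt hαt
  obtain ⟨d, hdd⟩ : ∃ d : Fin M ⊕ Fin M → ℝ, d = αt - αs := ⟨_, rfl⟩
  obtain ⟨q, hqdef⟩ : ∃ q : ℝ, q = d ⬝ᵥ H.mulVec d := ⟨_, rfl⟩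
  obtain ⟨L, hLdef⟩ : ∃ L : ℝ,
      L = (1/2) * (d ⬝ᵥ H.mulVec αs + αs ⬝ᵥ H.mulVec d) + b ⬝ᵥ d := ⟨_, rfl⟩
  obtain ⟨S, hSdef⟩ : ∃ S : ℝ, S = ∑ x, (αt x - αs x)^2 := ⟨_, rfl⟩
  have hdx : ∀ x, d x = αt x - αs x := by intro x; rw [hdd]; rfl
  have hqb : (M : ℝ) * c * υ * S ≤ q := by
    rw [hqdef, hSdef, hH]
    have := sodm_qform_bound M c υ hc hυ0 hυ1 Q hQ d
    simpa [hdx] using this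
  have hS : 0 ≤ S := by
    rw [hSdef]; exact Finset.sum_nonneg fun i _ => sq_nonneg _
  have ha : 0 ≤ (M : ℝ) * c * υ := by positivity
  -- expansion
  have hexp : ∀ t : ℝ, f (αs + t • d) = f αs + t * L + t ^ 2 / 2 * q := by
    intro t
    rw [hf, hf, hqdef, hLdef]
    simp only [mulVec_add, mulVec_smul, dotProduct_add, add_dotProduct,
      dotProduct_smul, smul_dotProduct, smul_eq_mul]
    ring
  -- feasibility of segment
  have hfeas : ∀ t : ℝ, 0 ≤ t → t ≤ 1 → ∀ x, 0 ≤ (αs + t • d) x := by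
    intro t ht0 ht1 x
    have hx : (αs + t • d) x = (1 - t) * αs x + t * αt x := by
      simp [hdx x, smul_eq_mul]; ring
    rw [hx]
    have h1 := hαs x; have h2 := hαt x
    have h1t : 0 ≤ 1 - t := by linarith
    positivity
  have key : ∀ t : ℝ, 0 ≤ t → t ≤ 1 → 0 ≤ t * L + t ^ 2 / 2 * q := by
    intro t ht0 ht1
    have := hmin (αs + t • d) (hfeas t ht0 ht1)
    rw [hexp t] at this
    linarith
  have main := sodm_arith ((M : ℝ) * c * υ) S L q hS ha hqb key
  have hαteq : αt = αs + (1:ℝ) • d := by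
    funext x; simp [hdx x]
  have hfαt : f αt = f αs + L + 1 / 2 * q := by
    rw [hαteq, hexp 1]; ring
  rw [hfαt, hSdef] at *
  linarith [main]
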